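/- Fix $k\ge 2$ and integers $n_1,\dots,n_{k-1}\ge 1$, and set $n_k-1=\sum_{i=1}^{k-1}(n_i-1)$ (boundary format). For variables $h,v_1,\dots,v_k$ let $\widetilde{v_i}=\sum_{j\ne i}v_j+ (\text{nothing else})$, i.e. $\widetilde{v_i}=\left(\sum_j v_j\right)-v_i$, and let $P_m = \left(\prod_{i=1}^{k-1}\sum_{j=0}^{n_i-1}(\widetilde{v_i}+h)^{n_i-1-j}v_i^{j}\right)\cdot\left(\sum_{j=0}^{m-1}(\widetilde{v_k}+h)^{m-1-j}v_k^{j}\right)$. Then for every $m\ge n_k$ and every $1\le d\le n_1$, the coefficient of $h^{n_1-d}v_1^{d-1}\left(\prod_{i=2}^{k-1}v_i^{n_i-1}\right)v_k^{m-1}$ in $P_m$ equals the coefficient of $h^{n_1-d}v_1^{d-1}\left(\prod_{i=2}^{k-1}v_i^{n_i-1}\right)v_k^{n_k-1}$ in $P_{n_k}$. -/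

import Mathlib

open MvPolynomial

/-- `ṽᵢ`: the sum of all variables `v_j` with `j ≠ i`, in
`ℤ[h, v_0, …, v_{k'}]` where `X none = h` and `X (some i) = v_i`. -/
noncomputable def tildeV (k' : ℕ) (i : Fin (k' + 1)) :
    MvPolynomial (Option (Fin (k' + 1))) ℤ :=
  ∑ j ∈ Finset.univ.erase i, X (some j)

/-- The polynomial
`P m = (∏_{i<k'} ∑_{j<nᵢ} (ṽᵢ+h)^(nᵢ-1-j) vᵢ^j) * (∑_{j<m} (ṽ_{k'}+h)^(m-1-j) v_{k'}^j)`,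
whose suitable coefficient computes the degree of the Kalman variety. -/
noncomputable def kalmanPoly (k' : ℕ) (n : Fin (k' + 1) → ℕ) (m : ℕ) :
    MvPolynomial (Option (Fin (k' + 1))) ℤ :=
  (∏ i : Fin k', ∑ j ∈ Finset.range (n i.castSucc),
      (tildeV k' i.castSucc + X none) ^ (n i.castSucc - 1 - j) * (X (some i.castSucc)) ^ j) *
    (∑ j ∈ Finset.range m,
      (tildeV k' (Fin.last k') + X none) ^ (m - 1 - j) * (X (some (Fin.last k'))) ^ j)

/-- The exponent vector of the monomial `h^(n₀-d) v₀^(d-1) (∏_{0<i<k'} vᵢ^(nᵢ-1)) v_{k'}^(m-1)`. -/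
noncomputable def kalmanExp (k' : ℕ) (n : Fin (k' + 1) → ℕ) (d m : ℕ) :
    Option (Fin (k' + 1)) →₀ ℕ :=
  Finsupp.equivFunOnFinite.symm fun x =>
    match x with
    | none => n 0 - d
    | some i => if i = 0 then d - 1 else if i = Fin.last k' then m - 1 else n i - 1

/-- The first (stable) factor of `kalmanPoly`. -/
noncomputable def kalA (k' : ℕ) (n : Fin (k' + 1) → ℕ) :
    MvPolynomial (Option (Fin (k' + 1))) ℤ :=
  ∏ i : Fin k', ∑ j ∈ Finset.range (n i.castSucc),
      (tildeV k' i.castSucc + X none) ^ (n i.castSucc - 1 - j) * (X (some i.castSucc)) ^ j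

lemma kalmanPoly_eq (k' : ℕ) (n : Fin (k' + 1) → ℕ) (m : ℕ) :
    kalmanPoly k' n m = kalA k' n *
      ∑ j ∈ Finset.range m,
        (tildeV k' (Fin.last k') + X none) ^ (m - 1 - j) * (X (some (Fin.last k'))) ^ j := rfl

lemma kalmanExp_apply (k' : ℕ) (n : Fin (k' + 1) → ℕ) (d m : ℕ) (x : Option (Fin (k' + 1))) :
    kalmanExp k' n d m x =
      match x with
      | none => n 0 - d
      | some i => if i = 0 then d - 1 else if i = Fin.last k' then m - 1 else n i - 1 := by
  simp [kalmanExp]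

lemma kalmanExp_apply_some (k' : ℕ) (n : Fin (k' + 1) → ℕ) (d m : ℕ) (i : Fin (k' + 1)) :
    kalmanExp k' n d m (some i) =
      if i = 0 then d - 1 else if i = Fin.last k' then m - 1 else n i - 1 := by
  simp [kalmanExp]

lemma last_ne_zero' (k' : ℕ) (hk : 1 ≤ k') : Fin.last k' ≠ 0 := by
  simp only [ne_eq, Fin.ext_iff, Fin.last, Fin.val_zero]
  omega

lemma degreeOf_w_last (k' : ℕ) :
    degreeOf (some (Fin.last k'))
      ((tildeV k' (Fin.last k') + X none : MvPolynomial (Option (Fin (k' + 1))) ℤ)) = 0 := by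
  refine Nat.le_zero.mp ((degreeOf_add_le _ _ _).trans (max_le ?_ ?_))
  · refine (degreeOf_sum_le _ _ _).trans (Finset.sup_le fun j hj => ?_)
    have hj' : j ≠ Fin.last k' := (Finset.mem_erase.mp hj).1
    rw [degreeOf_X]
    simp [hj'.symm]
  · rw [degreeOf_X]
    simp

lemma totalDegree_kalA (k' : ℕ) (n : Fin (k' + 1) → ℕ) (hn : ∀ i, 1 ≤ n i) :
    (kalA k' n).totalDegree ≤ ∑ i : Fin k', (n i.castSucc - 1) := by
  refine (totalDegree_finset_prod _ _).trans (Finset.sum_le_sum fun i _ => ?_)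
  refine (totalDegree_finset_sum _ _).trans (Finset.sup_le fun j hj => ?_)
  have hw : (tildeV k' i.castSucc + X none : MvPolynomial (Option (Fin (k' + 1))) ℤ).totalDegree
      ≤ 1 := by
    refine (totalDegree_add _ _).trans (max_le ?_ ?_)
    · exact (totalDegree_finset_sum _ _).trans
        (Finset.sup_le fun j _ => by rw [totalDegree_X])
    · rw [totalDegree_X]
  have hj' := Finset.mem_range.mp hj
  have hni := hn i.castSucc
  calc ((tildeV k' i.castSucc + X none) ^ (n i.castSucc - 1 - j)
          * (X (some i.castSucc)) ^ j : MvPolynomial (Option (Fin (k' + 1))) ℤ).totalDegree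
      ≤ (n i.castSucc - 1 - j) * 1 + j := by
        refine (totalDegree_mul _ _).trans (add_le_add
          ((totalDegree_pow _ _).trans (Nat.mul_le_mul_left _ hw)) ?_)
        rw [totalDegree_X_pow]
    _ ≤ n i.castSucc - 1 := by omega

lemma coeff_exp_shift (k' : ℕ) (hk : 1 ≤ k') (n : Fin (k' + 1) → ℕ) (d t c : ℕ)
    (p : MvPolynomial (Option (Fin (k' + 1))) ℤ) :
    coeff (kalmanExp k' n d (t + c + 1)) (p * X (some (Fin.last k')) ^ c)
      = coeff (kalmanExp k' n d (t + 1)) p := by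
  have hne := last_ne_zero' k' hk
  rw [X_pow_eq_monomial, coeff_mul_monomial']
  rw [if_pos]
  · rw [mul_one]
    congr 1
    ext x
    rw [Finsupp.tsub_apply]
    match x with
    | none => simp [kalmanExp_apply]
    | some i =>
      rcases eq_or_ne i (Fin.last k') with rfl | hi
      · rw [kalmanExp_apply, kalmanExp_apply]
        simp [hne, Finsupp.single_apply]
      · have h2 : ¬ (some (Fin.last k') = some i) := by simp [hi.symm]
        rw [kalmanExp_apply_some, kalmanExp_apply_some, Finsupp.single_apply, if_neg h2]
        simp [hi]
  · rw [Finsupp.single_le_iff, kalmanExp_apply]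
    simp [hne]

lemma Q_vanish (k' : ℕ) (hk : 1 ≤ k') (n : Fin (k' + 1) → ℕ) (hn : ∀ i, 1 ≤ n i)
    (hbd : n (Fin.last k') - 1 = ∑ i : Fin k', (n i.castSucc - 1))
    (d t : ℕ) (ht : n (Fin.last k') ≤ t) :
    coeff (kalmanExp k' n d (t + 1))
      (kalA k' n * (tildeV k' (Fin.last k') + X none) ^ t) = 0 := by
  set s : Option (Fin (k' + 1)) := some (Fin.last k')
  have hdeg : degreeOf s (kalA k' n * (tildeV k' (Fin.last k') + X none) ^ t) < t := by
    refine (degreeOf_mul_le _ _ _).trans_lt ?_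
    have h1 : degreeOf s (kalA k' n) ≤ n (Fin.last k') - 1 :=
      (degreeOf_le_totalDegree _ _).trans (hbd ▸ totalDegree_kalA k' n hn)
    have h2 : degreeOf s ((tildeV k' (Fin.last k') + X none :
        MvPolynomial (Option (Fin (k' + 1))) ℤ) ^ t) = 0 := by
      refine Nat.le_zero.mp ((degreeOf_pow_le _ _ _).trans ?_)
      rw [degreeOf_w_last]
      omega
    have := hn (Fin.last k')
    omega
  rw [← notMem_support_iff]
  intro hmem
  have := monomial_le_degreeOf s hmem
  have hs : kalmanExp k' n d (t + 1) s = t := by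
    rw [kalmanExp_apply]
    simp [s, last_ne_zero' k' hk]
  omega

/-- Stabilization at the boundary format: if `n_{k'} - 1 = ∑_{i<k'} (nᵢ - 1)` then for every
`m ≥ n_{k'}` the degree coefficient of `P m` equals the one of `P (n_{k'})`. -/
theorem kalman_degree_stabilization (k' : ℕ) (hk : 1 ≤ k')
    (n : Fin (k' + 1) → ℕ) (hn : ∀ i, 1 ≤ n i)
    (hbd : n (Fin.last k') - 1 = ∑ i : Fin k', (n i.castSucc - 1))
    (d : ℕ) (hd1 : 1 ≤ d) (hd2 : d ≤ n 0)
    (m : ℕ) (hm : n (Fin.last k') ≤ m) :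
    MvPolynomial.coeff (kalmanExp k' n d m) (kalmanPoly k' n m)
      = MvPolynomial.coeff (kalmanExp k' n d (n (Fin.last k')))
          (kalmanPoly k' n (n (Fin.last k'))) := by
  have key : ∀ m', n (Fin.last k') ≤ m' →
      coeff (kalmanExp k' n d m') (kalmanPoly k' n m')
        = ∑ t ∈ Finset.range (n (Fin.last k')),
            coeff (kalmanExp k' n d (t + 1))
              (kalA k' n * (tildeV k' (Fin.last k') + X none) ^ t) := by
    intro m' hm'
    have hm1 : 1 ≤ m' := le_trans (hn _) hm'
    rw [kalmanPoly_eq, Finset.mul_sum, coeff_sum]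
    have hterm : ∀ j ∈ Finset.range m',
        coeff (kalmanExp k' n d m')
          (kalA k' n * ((tildeV k' (Fin.last k') + X none) ^ (m' - 1 - j)
            * (X (some (Fin.last k'))) ^ j))
        = coeff (kalmanExp k' n d ((m' - 1 - j) + 1))
            (kalA k' n * (tildeV k' (Fin.last k') + X none) ^ (m' - 1 - j)) := by
      intro j hj
      have hj' := Finset.mem_range.mp hj
      obtain ⟨t, ht⟩ : ∃ t, m' - 1 - j = t := ⟨_, rfl⟩
      rw [ht]
      have hmj : t + j + 1 = m' := by omega
      rw [← mul_assoc, ← hmj]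
      exact coeff_exp_shift k' hk n d t j _
    rw [Finset.sum_congr rfl hterm,
      Finset.sum_range_reflect (fun t => coeff (kalmanExp k' n d (t + 1))
        (kalA k' n * (tildeV k' (Fin.last k') + X none) ^ t)) m']
    refine (Finset.sum_subset (Finset.range_subset_range.mpr hm') fun t _ htn => ?_).symm
    exact Q_vanish k' hk n hn hbd d t (le_of_not_gt fun h => htn (Finset.mem_range.mpr h))
  rw [key m hm, key _ le_rfl]
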